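/- Let g = so(2ℓ, ℂ) of type D_ℓ and let ĝ = g ⊗ ℂ[t, t⁻¹] ⊕ ℂK be the associated affine Lie algebra of level k = n − ℓ + 1 (n ∈ ℤ_{>0}), acting on the generalized Verma module N(k, 0) = U(ĝ) ⊗_{U(g⊗ℂ[t] ⊕ ℂK)} ℂ_k with vacuum vector 1. Then the vector v_n = (Σ_{i=2}^{ℓ} e_{ε_1−ε_i}(−1) e_{ε_1+ε_i}(−1))^n · 1 is a singular vector: e_{ε_j−ε_{j+1}}(0) v_n = 0 for j = 1, ..., ℓ−1, e_{ε_{ℓ-1}+ε_ℓ}(0) v_n = 0, and f_{ε_1+ε_2}(1) v_n = 0. -/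

import Mathlib

open Matrix Finset

/- `g = so(2ℓ, ℂ)` of type `D_ℓ` realized inside matrices indexed by `Fin ℓ ⊕ Fin ℓ`, with
Bourbaki root vectors as below. The normalized invariant form (with `κ(θ,θ) = 2` for the
highest root `θ = ε_1+ε_2`) is `κ(x,y) = tr(xy)/2` in this realization. A representation of the
affine Lie algebra `ĝ = g ⊗ ℂ[t,t⁻¹] ⊕ ℂK` of level `k` on a space `N` is encoded by linear
maps `act m : g →ₗ (N →ₗ N)` (`x(m) := act m x`) satisfying
`[x(m), y(m')] = [x,y](m+m') + m δ_{m+m',0} κ(x,y) k`, with `K` acting by the scalar `k`.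
The vacuum vector of the generalized Verma module `N(k,0)` is annihilated by all `x(m)`,
`m ≥ 0`. -/

noncomputable def Est (ℓ : ℕ) (a b : Fin ℓ ⊕ Fin ℓ) :
    Matrix (Fin ℓ ⊕ Fin ℓ) (Fin ℓ ⊕ Fin ℓ) ℂ :=
  Matrix.single a b 1

/-- root vector `e_{ε_i − ε_j}` (0-based indices) -/
noncomputable def eM (ℓ : ℕ) (i j : Fin ℓ) : Matrix (Fin ℓ ⊕ Fin ℓ) (Fin ℓ ⊕ Fin ℓ) ℂ :=
  Est ℓ (Sum.inl i) (Sum.inl j) - Est ℓ (Sum.inr j) (Sum.inr i)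

/-- root vector `e_{ε_i + ε_j}` (0-based indices) -/
noncomputable def eP (ℓ : ℕ) (i j : Fin ℓ) : Matrix (Fin ℓ ⊕ Fin ℓ) (Fin ℓ ⊕ Fin ℓ) ℂ :=
  Est ℓ (Sum.inl i) (Sum.inr j) - Est ℓ (Sum.inl j) (Sum.inr i)

/-- root vector `f_{ε_i + ε_j}` (0-based indices) -/
noncomputable def fP (ℓ : ℕ) (i j : Fin ℓ) : Matrix (Fin ℓ ⊕ Fin ℓ) (Fin ℓ ⊕ Fin ℓ) ℂ :=
  Est ℓ (Sum.inr j) (Sum.inl i) - Est ℓ (Sum.inr i) (Sum.inl j)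

lemma Est_mul {ℓ : ℕ} (a b c d : Fin ℓ ⊕ Fin ℓ) :
    Est ℓ a b * Est ℓ c d = if b = c then Est ℓ a d else 0 := by
  unfold Est
  rcases eq_or_ne b c with h | h
  · subst h; rw [if_pos rfl, Matrix.single_mul_single_same, one_mul]
  · rw [if_neg h]; exact Matrix.single_mul_single_of_ne (c := 1) a b c h 1

lemma Est_trace {ℓ : ℕ} (a b : Fin ℓ ⊕ Fin ℓ) :
    (Est ℓ a b).trace = if a = b then 1 else 0 := by
  unfold Est
  rcases eq_or_ne a b with h | h
  · subst h; rw [if_pos rfl, Matrix.trace_single_eq_same]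
  · rw [if_neg h, Matrix.trace_single_eq_of_ne a b 1 h]

section
variable {ℓ : ℕ}

lemma lie1 (z a b : Fin ℓ) (ha : a ≠ z) (hb : b ≠ z) : ⁅eM ℓ z a, eM ℓ z b⁆ = 0 := by
  simp only [Ring.lie_def, eM, sub_mul, mul_sub, Est_mul]
  simp [ha, hb, ha.symm, hb.symm]

lemma lie2 (z a b : Fin ℓ) (ha : a ≠ z) : ⁅eM ℓ z a, eP ℓ z b⁆ = 0 := by
  simp only [Ring.lie_def, eM, eP, sub_mul, mul_sub, Est_mul]
  rcases eq_or_ne a b with h | h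
  · subst h; simp [ha, ha.symm]
  · simp [ha, ha.symm, h, h.symm]

lemma lie3 (z a b i : Fin ℓ) (hb : b ≠ z) :
    ⁅eM ℓ a b, eM ℓ z i⁆ = if i = a then -(eM ℓ z b) else 0 := by
  simp only [Ring.lie_def, eM, sub_mul, mul_sub, Est_mul]
  rcases eq_or_ne i a with h | h
  · subst h; simp [hb, hb.symm] <;> abel
  · simp [hb, hb.symm, h, h.symm]

lemma lie4 (z a b i : Fin ℓ) (hb : b ≠ z) :
    ⁅eM ℓ a b, eP ℓ z i⁆ = if i = b then eP ℓ z a else 0 := by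
  simp only [Ring.lie_def, eM, eP, sub_mul, mul_sub, Est_mul]
  rcases eq_or_ne i b with h | h
  · subst h; simp [hb, hb.symm] <;> abel
  · simp [hb, hb.symm, h, h.symm]

lemma lie5 (z p q i : Fin ℓ) :
    ⁅eP ℓ p q, eM ℓ z i⁆
      = (if i = p then -(eP ℓ z q) else 0) + (if i = q then eP ℓ z p else 0) := by
  simp only [Ring.lie_def, eP, eM, sub_mul, mul_sub, Est_mul]
  rcases eq_or_ne i p with h1 | h1 <;> rcases eq_or_ne i q with h2 | h2
  · subst h1; subst h2; simp <;> abel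
  · subst h1; simp [h2, h2.symm] <;> abel
  · subst h2; simp [h1, h1.symm] <;> abel
  · simp [h1, h1.symm, h2, h2.symm]

lemma lie6 (a b c d : Fin ℓ) : ⁅eP ℓ a b, eP ℓ c d⁆ = 0 := by
  simp only [Ring.lie_def, eP, sub_mul, mul_sub, Est_mul]
  simp

lemma lie7 (z o i : Fin ℓ) (ho : o ≠ z) : ⁅fP ℓ z o, eM ℓ z i⁆ = -(fP ℓ o i) := by
  simp only [Ring.lie_def, fP, eM, sub_mul, mul_sub, Est_mul]
  rcases eq_or_ne i o with h | h
  · subst h; simp [ho, ho.symm] <;> abel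
  · rcases eq_or_ne i z with h2 | h2
    · subst h2; simp [ho, ho.symm, h, h.symm] <;> abel
    · simp [ho, ho.symm, h, h.symm, h2, h2.symm] <;> abel

lemma lie8 (z o i : Fin ℓ) (ho : o ≠ z) (hi : i ≠ z) :
    ⁅fP ℓ z o, eP ℓ z i⁆
      = -(eM ℓ i o)
        + (if i = o then (Est ℓ (Sum.inr z) (Sum.inr z) - Est ℓ (Sum.inl z) (Sum.inl z))
           else 0) := by
  simp only [Ring.lie_def, fP, eP, eM, sub_mul, mul_sub, Est_mul]
  rcases eq_or_ne i o with h | h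
  · subst h; simp [ho, ho.symm, hi, hi.symm] <;> abel
  · simp [ho, ho.symm, hi, hi.symm, h, h.symm] <;> abel

lemma lie9 (z o i j : Fin ℓ) (ho : o ≠ z) (hi : i ≠ z) : ⁅fP ℓ o i, eM ℓ z j⁆ = 0 := by
  simp only [Ring.lie_def, fP, eM, sub_mul, mul_sub, Est_mul]
  simp [ho, ho.symm, hi, hi.symm]

lemma lie10 (z o i j : Fin ℓ) (ho : o ≠ z) (hi : i ≠ z) :
    ⁅fP ℓ o i, eP ℓ z j⁆
      = (if j = i then -(eM ℓ z o) else 0) + (if j = o then eM ℓ z i else 0) := by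
  simp only [Ring.lie_def, fP, eP, eM, sub_mul, mul_sub, Est_mul]
  rcases eq_or_ne j i with h1 | h1 <;> rcases eq_or_ne j o with h2 | h2
  · subst h1; subst h2; simp [ho, ho.symm, hi, hi.symm] <;> abel
  · subst h1; simp [ho, ho.symm, hi, hi.symm, h2, h2.symm] <;> abel
  · subst h2; simp [ho, ho.symm, hi, hi.symm, h1, h1.symm] <;> abel
  · simp [ho, ho.symm, hi, hi.symm, h1, h1.symm, h2, h2.symm]

lemma lie11 (z o i j : Fin ℓ) (ho : o ≠ z) :
    ⁅eM ℓ i o, eM ℓ z j⁆ = if j = i then -(eM ℓ z o) else 0 := by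
  simp only [Ring.lie_def, eM, sub_mul, mul_sub, Est_mul]
  rcases eq_or_ne j i with h | h
  · subst h; simp [ho, ho.symm] <;> abel
  · simp [ho, ho.symm, h, h.symm]

lemma lie12 (z o i j : Fin ℓ) (ho : o ≠ z) :
    ⁅eM ℓ i o, eP ℓ z j⁆ = if j = o then eP ℓ z i else 0 := by
  simp only [Ring.lie_def, eM, eP, sub_mul, mul_sub, Est_mul]
  rcases eq_or_ne j o with h | h
  · subst h; simp [ho, ho.symm] <;> abel
  · simp [ho, ho.symm, h, h.symm]

lemma lie13 (z j : Fin ℓ) (hj : j ≠ z) : ⁅eM ℓ z z, eM ℓ z j⁆ = eM ℓ z j := by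
  simp only [Ring.lie_def, eM, sub_mul, mul_sub, Est_mul]
  simp [hj, hj.symm] <;> abel

lemma lie14 (z j : Fin ℓ) (hj : j ≠ z) : ⁅eM ℓ z z, eP ℓ z j⁆ = eP ℓ z j := by
  simp only [Ring.lie_def, eM, eP, sub_mul, mul_sub, Est_mul]
  simp [hj, hj.symm] <;> abel

lemma tr1 (z o i : Fin ℓ) (ho : o ≠ z) : (fP ℓ z o * eM ℓ z i).trace = 0 := by
  simp only [fP, eM, sub_mul, mul_sub, Est_mul]
  simp [ho, ho.symm, Matrix.trace_sub, Est_trace]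

lemma tr2 (z o i : Fin ℓ) (ho : o ≠ z) (hi : i ≠ z) :
    (fP ℓ z o * eP ℓ z i).trace = if i = o then 2 else 0 := by
  simp only [fP, eP, sub_mul, mul_sub, Est_mul]
  rcases eq_or_ne i o with h | h
  · subst h; simp [ho, ho.symm, hi, hi.symm, Est_trace]; norm_num
  · simp [ho, ho.symm, hi, hi.symm, h, h.symm, Est_trace]

end

section RepAux

variable {ℓ : ℕ} {N : Type*} [AddCommGroup N] [Module ℂ N]

/-- index set -/
def SD (ℓ : ℕ) : Finset (Fin ℓ) := univ.filter (fun i : Fin ℓ => (i : ℕ) ≠ 0)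

/-- the operator Ω -/
noncomputable def Om (act : ℤ → Matrix (Fin ℓ ⊕ Fin ℓ) (Fin ℓ ⊕ Fin ℓ) ℂ →ₗ[ℂ] Module.End ℂ N)
    (z : Fin ℓ) : Module.End ℂ N :=
  ∑ i ∈ SD ℓ, act (-1) (eM ℓ z i) * act (-1) (eP ℓ z i)

lemma memSD {z i : Fin ℓ} (hz : (z : ℕ) = 0) : i ∈ SD ℓ ↔ i ≠ z := by
  simp [SD, Ne, Fin.ext_iff, hz]

lemma kill_pow (Ω X : Module.End ℂ N) (h : X * Ω = Ω * X) (v : N) (hv : X v = 0) :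
    ∀ m : ℕ, X ((Ω ^ m) v) = 0 := by
  intro m
  induction m with
  | zero => simpa using hv
  | succ m ih =>
    have h1 : X ((Ω ^ (m + 1)) v) = (X * Ω) ((Ω ^ m) v) := by rw [pow_succ']; rfl
    rw [h1, h]
    show Ω (X ((Ω ^ m) v)) = 0
    rw [ih, map_zero]

lemma scale_pow (Ω X : Module.End ℂ N) (c : ℂ) (h : X * Ω - Ω * X = c • Ω) (v : N)
    (hv : X v = 0) : ∀ m : ℕ, X ((Ω ^ m) v) = ((m : ℂ) * c) • ((Ω ^ m) v) := by
  intro m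
  induction m with
  | zero => simpa using hv
  | succ m ih =>
    have h1 : X ((Ω ^ (m + 1)) v) = (X * Ω) ((Ω ^ m) v) := by rw [pow_succ']; rfl
    have h2 : X * Ω = Ω * X + c • Ω := by rw [← h]; abel
    have h3 : (Ω ^ (m + 1)) v = Ω ((Ω ^ m) v) := by rw [pow_succ']; rfl
    rw [h1, h2]
    show Ω (X ((Ω ^ m) v)) + (c • Ω) ((Ω ^ m) v) = _
    rw [ih, _root_.map_smul, h3, LinearMap.smul_apply]
    rw [← add_smul]
    congr 1
    push_cast; ring

end RepAux
section Comm

variable {ℓ : ℕ} {N : Type*} [AddCommGroup N] [Module ℂ N]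
variable {act : ℤ → Matrix (Fin ℓ ⊕ Fin ℓ) (Fin ℓ ⊕ Fin ℓ) ℂ →ₗ[ℂ] Module.End ℂ N} {k : ℂ}

def HC (act : ℤ → Matrix (Fin ℓ ⊕ Fin ℓ) (Fin ℓ ⊕ Fin ℓ) ℂ →ₗ[ℂ] Module.End ℂ N) (k : ℂ) : Prop :=
  ∀ (m m' : ℤ) (x y : Matrix (Fin ℓ ⊕ Fin ℓ) (Fin ℓ ⊕ Fin ℓ) ℂ),
    act m x * act m' y - act m' y * act m x
      = act (m + m') ⁅x, y⁆
        + (if m + m' = 0 then (m : ℂ) * ((x * y).trace / 2) * k else 0) • 1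

lemma hC01 (hC : HC act k) (x y : Matrix (Fin ℓ ⊕ Fin ℓ) (Fin ℓ ⊕ Fin ℓ) ℂ) :
    act 0 x * act (-1) y - act (-1) y * act 0 x = act (-1) ⁅x, y⁆ := by
  have h := hC 0 (-1) x y
  rw [show (0 : ℤ) + -1 = -1 by decide] at h
  rw [if_neg (by decide), zero_smul, add_zero] at h
  exact h

lemma hCm1 (hC : HC act k) (x y : Matrix (Fin ℓ ⊕ Fin ℓ) (Fin ℓ ⊕ Fin ℓ) ℂ) :
    act (-1) x * act (-1) y - act (-1) y * act (-1) x = act (-2) ⁅x, y⁆ := by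
  have h := hC (-1) (-1) x y
  rw [show (-1 : ℤ) + -1 = -2 by decide] at h
  rw [if_neg (by decide), zero_smul, add_zero] at h
  exact h

lemma hC1m1 (hC : HC act k) (x y : Matrix (Fin ℓ ⊕ Fin ℓ) (Fin ℓ ⊕ Fin ℓ) ℂ) :
    act 1 x * act (-1) y - act (-1) y * act 1 x
      = act 0 ⁅x, y⁆ + (((x * y).trace / 2) * k) • 1 := by
  have h := hC 1 (-1) x y
  rw [show (1 : ℤ) + -1 = 0 by decide, if_pos rfl] at h
  push_cast at h
  rw [one_mul] at h
  exact h

lemma expandX (z : Fin ℓ) (X : Module.End ℂ N) :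
    X * Om act z - Om act z * X
      = ∑ i ∈ SD ℓ,
          ((X * act (-1) (eM ℓ z i) - act (-1) (eM ℓ z i) * X) * act (-1) (eP ℓ z i)
            + act (-1) (eM ℓ z i) * (X * act (-1) (eP ℓ z i) - act (-1) (eP ℓ z i) * X)) := by
  rw [Om, Finset.mul_sum, Finset.sum_mul, ← Finset.sum_sub_distrib]
  exact Finset.sum_congr rfl fun i _ => by noncomm_ring

lemma commA (hC : HC act k) (z a b : Fin ℓ) (hz : (z : ℕ) = 0) (hb : b ≠ z) :
    act 0 (eM ℓ a b) * Om act z = Om act z * act 0 (eM ℓ a b) := by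
  rw [← sub_eq_zero, expandX]
  have h1 : ∀ i ∈ SD ℓ,
      (act 0 (eM ℓ a b) * act (-1) (eM ℓ z i) - act (-1) (eM ℓ z i) * act 0 (eM ℓ a b))
          * act (-1) (eP ℓ z i)
        + act (-1) (eM ℓ z i)
          * (act 0 (eM ℓ a b) * act (-1) (eP ℓ z i) - act (-1) (eP ℓ z i) * act 0 (eM ℓ a b))
      = (if i = a then -(act (-1) (eM ℓ z b) * act (-1) (eP ℓ z i)) else 0)
        + (if i = b then act (-1) (eM ℓ z i) * act (-1) (eP ℓ z a) else 0) := by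
    intro i _
    rw [hC01 hC, hC01 hC, lie3 z a b i hb, lie4 z a b i hb]
    by_cases h1 : i = a <;> by_cases h2 : i = b <;> subst_vars <;>
      simp [*, mul_add, mul_neg, add_mul, neg_mul]
  rw [Finset.sum_congr rfl h1, Finset.sum_add_distrib,
    Finset.sum_ite_eq' (SD ℓ) a, Finset.sum_ite_eq' (SD ℓ) b,
    if_pos ((memSD hz).mpr hb)]
  by_cases ha : a = z
  · rw [if_neg (by simp [memSD hz, ha])]
    subst ha
    simp [eP, sub_self]
  · rw [if_pos ((memSD hz).mpr ha)]
    simp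

lemma commB (hC : HC act k) (z p q : Fin ℓ) (hz : (z : ℕ) = 0) (hp : p ≠ z) (hq : q ≠ z) :
    act 0 (eP ℓ p q) * Om act z = Om act z * act 0 (eP ℓ p q) := by
  rw [← sub_eq_zero, expandX]
  have h1 : ∀ i ∈ SD ℓ,
      (act 0 (eP ℓ p q) * act (-1) (eM ℓ z i) - act (-1) (eM ℓ z i) * act 0 (eP ℓ p q))
          * act (-1) (eP ℓ z i)
        + act (-1) (eM ℓ z i)
          * (act 0 (eP ℓ p q) * act (-1) (eP ℓ z i) - act (-1) (eP ℓ z i) * act 0 (eP ℓ p q))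
      = (if i = p then -(act (-1) (eP ℓ z q) * act (-1) (eP ℓ z i)) else 0)
        + (if i = q then act (-1) (eP ℓ z p) * act (-1) (eP ℓ z i) else 0) := by
    intro i _
    rw [hC01 hC, hC01 hC, lie5 z p q i, lie6]
    by_cases h1 : i = p <;> by_cases h2 : i = q <;> subst_vars <;>
      simp [*, mul_add, mul_neg, add_mul, neg_mul]
  rw [Finset.sum_congr rfl h1, Finset.sum_add_distrib,
    Finset.sum_ite_eq' (SD ℓ) p, Finset.sum_ite_eq' (SD ℓ) q,
    if_pos ((memSD hz).mpr hp), if_pos ((memSD hz).mpr hq)]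
  have h2 : act (-1) (eP ℓ z p) * act (-1) (eP ℓ z q)
      - act (-1) (eP ℓ z q) * act (-1) (eP ℓ z p) = 0 := by
    rw [hCm1 hC, lie6, map_zero]
  rw [sub_eq_zero] at h2
  rw [← h2]
  abel

lemma commEo (hC : HC act k) (z o : Fin ℓ) (hz : (z : ℕ) = 0) (ho : o ≠ z) :
    act (-1) (eM ℓ z o) * Om act z = Om act z * act (-1) (eM ℓ z o) := by
  rw [← sub_eq_zero, expandX]
  refine Finset.sum_eq_zero fun i hi => ?_
  have hiz : i ≠ z := (memSD hz).mp hi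
  rw [hCm1 hC, hCm1 hC, lie1 z o i ho hiz, lie2 z o i ho]
  simp

lemma commH (hC : HC act k) (z : Fin ℓ) (hz : (z : ℕ) = 0) :
    act 0 (eM ℓ z z) * Om act z - Om act z * act 0 (eM ℓ z z) = (2 : ℂ) • Om act z := by
  rw [expandX]
  rw [Om, Finset.smul_sum]
  refine Finset.sum_congr rfl fun i hi => ?_
  have hiz : i ≠ z := (memSD hz).mp hi
  rw [hC01 hC, hC01 hC, lie13 z i hiz, lie14 z i hiz, two_smul]

lemma commA' (hC : HC act k) (z o i : Fin ℓ) (hz : (z : ℕ) = 0) (ho : o ≠ z) (hi : i ≠ z) :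
    act 0 (fP ℓ o i) * Om act z = Om act z * act 0 (fP ℓ o i) := by
  rw [← sub_eq_zero, expandX]
  have h1 : ∀ j ∈ SD ℓ,
      (act 0 (fP ℓ o i) * act (-1) (eM ℓ z j) - act (-1) (eM ℓ z j) * act 0 (fP ℓ o i))
          * act (-1) (eP ℓ z j)
        + act (-1) (eM ℓ z j)
          * (act 0 (fP ℓ o i) * act (-1) (eP ℓ z j) - act (-1) (eP ℓ z j) * act 0 (fP ℓ o i))
      = (if j = i then -(act (-1) (eM ℓ z j) * act (-1) (eM ℓ z o)) else 0)
        + (if j = o then act (-1) (eM ℓ z j) * act (-1) (eM ℓ z i) else 0) := by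
    intro j _
    rw [hC01 hC, hC01 hC, lie9 z o i j ho hi, lie10 z o i j ho hi, map_zero]
    by_cases h1 : j = i <;> by_cases h2 : j = o <;> subst_vars <;>
      simp [*, mul_add, mul_neg, add_mul, neg_mul]
  rw [Finset.sum_congr rfl h1, Finset.sum_add_distrib,
    Finset.sum_ite_eq' (SD ℓ) i, Finset.sum_ite_eq' (SD ℓ) o,
    if_pos ((memSD hz).mpr hi), if_pos ((memSD hz).mpr ho)]
  have h2 : act (-1) (eM ℓ z o) * act (-1) (eM ℓ z i)
      - act (-1) (eM ℓ z i) * act (-1) (eM ℓ z o) = 0 := by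
    rw [hCm1 hC, lie1 z o i ho hi, map_zero]
  rw [sub_eq_zero] at h2
  rw [h2]
  abel

lemma commB' (hC : HC act k) (z o i : Fin ℓ) (hz : (z : ℕ) = 0) (ho : o ≠ z) (hi : i ≠ z) :
    act 0 (eM ℓ i o) * Om act z = Om act z * act 0 (eM ℓ i o) := by
  rw [← sub_eq_zero, expandX]
  have h1 : ∀ j ∈ SD ℓ,
      (act 0 (eM ℓ i o) * act (-1) (eM ℓ z j) - act (-1) (eM ℓ z j) * act 0 (eM ℓ i o))
          * act (-1) (eP ℓ z j)
        + act (-1) (eM ℓ z j)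
          * (act 0 (eM ℓ i o) * act (-1) (eP ℓ z j) - act (-1) (eP ℓ z j) * act 0 (eM ℓ i o))
      = (if j = i then -(act (-1) (eM ℓ z o) * act (-1) (eP ℓ z j)) else 0)
        + (if j = o then act (-1) (eM ℓ z j) * act (-1) (eP ℓ z i) else 0) := by
    intro j _
    rw [hC01 hC, hC01 hC, lie11 z o i j ho, lie12 z o i j ho]
    by_cases h1 : j = i <;> by_cases h2 : j = o <;> subst_vars <;>
      simp [*, mul_add, mul_neg, add_mul, neg_mul]
  rw [Finset.sum_congr rfl h1, Finset.sum_add_distrib,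
    Finset.sum_ite_eq' (SD ℓ) i, Finset.sum_ite_eq' (SD ℓ) o,
    if_pos ((memSD hz).mpr hi), if_pos ((memSD hz).mpr ho)]
  abel

end Comm
section FPart

variable {ℓ : ℕ} {N : Type*} [AddCommGroup N] [Module ℂ N]
variable {act : ℤ → Matrix (Fin ℓ ⊕ Fin ℓ) (Fin ℓ ⊕ Fin ℓ) ℂ →ₗ[ℂ] Module.End ℂ N} {k : ℂ}

lemma commF (hC : HC act k) (z o : Fin ℓ) (hz : (z : ℕ) = 0) (ho : o ≠ z) :
    act 1 (fP ℓ z o) * Om act z - Om act z * act 1 (fP ℓ z o)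
      = (∑ i ∈ SD ℓ, (-(act 0 (fP ℓ o i) * act (-1) (eP ℓ z i))
            - act (-1) (eM ℓ z i) * act 0 (eM ℓ i o)))
        + act (-1) (eM ℓ z o) *
            (act 0 (Est ℓ (Sum.inr z) (Sum.inr z) - Est ℓ (Sum.inl z) (Sum.inl z))
              + k • (1 : Module.End ℂ N)) := by
  rw [expandX]
  have h1 : ∀ i ∈ SD ℓ,
      (act 1 (fP ℓ z o) * act (-1) (eM ℓ z i) - act (-1) (eM ℓ z i) * act 1 (fP ℓ z o))
          * act (-1) (eP ℓ z i)
        + act (-1) (eM ℓ z i)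
          * (act 1 (fP ℓ z o) * act (-1) (eP ℓ z i) - act (-1) (eP ℓ z i) * act 1 (fP ℓ z o))
      = (-(act 0 (fP ℓ o i) * act (-1) (eP ℓ z i))
            - act (-1) (eM ℓ z i) * act 0 (eM ℓ i o))
        + (if i = o then act (-1) (eM ℓ z i) *
            (act 0 (Est ℓ (Sum.inr z) (Sum.inr z) - Est ℓ (Sum.inl z) (Sum.inl z))
              + k • (1 : Module.End ℂ N)) else 0) := by
    intro i hi
    have hiz : i ≠ z := (memSD hz).mp hi
    rw [hC1m1 hC, hC1m1 hC, lie7 z o i ho, lie8 z o i ho hiz, tr1 z o i ho, tr2 z o i ho hiz]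
    by_cases h2 : i = o
    · subst h2
      simp only [if_pos rfl, map_add, map_neg]
      norm_num
      noncomm_ring
    · simp only [if_neg h2, map_add, map_neg, map_zero]
      norm_num
      noncomm_ring
  rw [Finset.sum_congr rfl h1, Finset.sum_add_distrib,
    Finset.sum_ite_eq' (SD ℓ) o, if_pos ((memSD hz).mpr ho)]

end FPart

/-- in any representation of the affine Lie algebra `ĝ` of type `D_ℓ^{(1)}` of
level `k = n − ℓ + 1` (`n ∈ ℤ_{>0}`) with a vacuum vector annihilated by `g ⊗ ℂ[t] ⊕ ℂK`
(K acting by `k`) — in particular in the generalized Verma module `N(k, 0)` — the vector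
`v_n = (Σ_{i=2}^{ℓ} e_{ε_1−ε_i}(−1) e_{ε_1+ε_i}(−1))^n · 1` is a singular vector:
`e_{ε_j−ε_{j+1}}(0) v_n = 0` for `j = 1, ..., ℓ−1`, `e_{ε_{ℓ-1}+ε_ℓ}(0) v_n = 0`, and
`f_{ε_1+ε_2}(1) v_n = 0`. -/
theorem stmt10_singular_vector_vn
    (ℓ n : ℕ) (hℓ : 3 ≤ ℓ) (hn : 0 < n)
    (N : Type*) [AddCommGroup N] [Module ℂ N]
    (act : ℤ → Matrix (Fin ℓ ⊕ Fin ℓ) (Fin ℓ ⊕ Fin ℓ) ℂ →ₗ[ℂ] Module.End ℂ N)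
    (k : ℂ) (hk : k = (n : ℂ) - (ℓ : ℂ) + 1)
    (hcomm : ∀ (m m' : ℤ) (x y : Matrix (Fin ℓ ⊕ Fin ℓ) (Fin ℓ ⊕ Fin ℓ) ℂ) (w : N),
      act m x (act m' y w) - act m' y (act m x w)
        = act (m + m') ⁅x, y⁆ w
          + (if m + m' = 0 then (m : ℂ) * ((x * y).trace / 2) * k else 0) • w)
    (vac : N) (hvac : ∀ m : ℤ, 0 ≤ m → ∀ x, act m x vac = 0) :
    ∀ v : N,
      v = ((∑ i ∈ univ.filter (fun i : Fin ℓ => (i : ℕ) ≠ 0),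
              (act (-1) (eM ℓ ⟨0, by omega⟩ i)) * (act (-1) (eP ℓ ⟨0, by omega⟩ i))) ^ n) vac →
      ((∀ (j : ℕ) (hj : j + 1 < ℓ), act 0 (eM ℓ ⟨j, by omega⟩ ⟨j + 1, hj⟩) v = 0) ∧
       act 0 (eP ℓ ⟨ℓ - 2, by omega⟩ ⟨ℓ - 1, by omega⟩) v = 0 ∧
       act 1 (fP ℓ ⟨0, by omega⟩ ⟨1, by omega⟩) v = 0) := by
  intro v hv
  have hz0 : 0 < ℓ := by omega
  have ho1 : 1 < ℓ := by omega
  set z : Fin ℓ := ⟨0, hz0⟩ with hzdef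
  set o : Fin ℓ := ⟨1, ho1⟩ with hodef
  have hzv : (z : ℕ) = 0 := rfl
  have hoz : o ≠ z := by
    intro h
    have h2 : (1 : ℕ) = 0 := congrArg Fin.val h
    exact one_ne_zero h2
  have hC : HC act k := by
    intro m m' x y
    ext w
    have h := hcomm m m' x y w
    simp only [LinearMap.sub_apply, Module.End.mul_apply, LinearMap.add_apply,
      LinearMap.smul_apply, Module.End.one_apply]
    exact h
  have hv' : v = ((Om act z) ^ n) vac := hv
  refine ⟨?_, ?_, ?_⟩
  · -- e_{ε_j - ε_{j+1}}(0)
    intro j hj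
    have hb : (⟨j + 1, hj⟩ : Fin ℓ) ≠ z := by
      intro h
      have h2 : j + 1 = 0 := congrArg Fin.val h
      omega
    rw [hv']
    exact kill_pow _ _ (commA hC z ⟨j, by omega⟩ ⟨j + 1, hj⟩ hzv hb) vac
      (hvac 0 le_rfl _) n
  · -- e_{ε_{ℓ-1}+ε_ℓ}(0)
    have hp : (⟨ℓ - 2, by omega⟩ : Fin ℓ) ≠ z := by
      intro h
      have h2 : ℓ - 2 = 0 := congrArg Fin.val h
      omega
    have hq : (⟨ℓ - 1, by omega⟩ : Fin ℓ) ≠ z := by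
      intro h
      have h2 : ℓ - 1 = 0 := congrArg Fin.val h
      omega
    rw [hv']
    exact kill_pow _ _ (commB hC z _ _ hzv hp hq) vac (hvac 0 le_rfl _) n
  · -- f_{ε_1+ε_2}(1)
    set c : ℂ := k + (ℓ : ℂ) - 2 with hcdef
    have hA'kill : ∀ i : Fin ℓ, i ≠ z → ∀ m : ℕ,
        act 0 (fP ℓ o i) (((Om act z) ^ m) vac) = 0 :=
      fun i hi => kill_pow _ _ (commA' hC z o i hzv hoz hi) vac (hvac 0 le_rfl _)
    have hB'kill : ∀ i : Fin ℓ, i ≠ z → ∀ m : ℕ,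
        act 0 (eM ℓ i o) (((Om act z) ^ m) vac) = 0 :=
      fun i hi => kill_pow _ _ (commB' hC z o i hzv hoz hi) vac (hvac 0 le_rfl _)
    have hHs : ∀ m : ℕ, act 0 (eM ℓ z z) (((Om act z) ^ m) vac)
        = ((m : ℂ) * 2) • ((Om act z) ^ m) vac :=
      scale_pow _ _ 2 (commH hC z hzv) vac (hvac 0 le_rfl _)
    have hEoOm := commEo hC z o hzv hoz
    have hcard : (((SD ℓ).card : ℂ)) = (ℓ : ℂ) - 1 := by
      have h1 : SD ℓ = (univ : Finset (Fin ℓ)).erase z := by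
        ext i
        simp [SD, Finset.mem_erase, Ne, Fin.ext_iff, hzv]
      rw [h1, Finset.card_erase_of_mem (mem_univ z), Finset.card_univ, Fintype.card_fin,
        Nat.cast_sub (by omega : 1 ≤ ℓ), Nat.cast_one]
    have hFu : ∀ m : ℕ, act 1 (fP ℓ z o) (((Om act z) ^ (m + 1)) vac)
        = Om act z (act 1 (fP ℓ z o) (((Om act z) ^ m) vac))
          + (c - 2 * (m : ℂ)) • (act (-1) (eM ℓ z o) (((Om act z) ^ m) vac)) := by
      intro m
      have h0 : ((Om act z) ^ (m + 1)) vac = Om act z (((Om act z) ^ m) vac) := by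
        rw [pow_succ']; rfl
      have hcf := congrArg (fun T : Module.End ℂ N => T (((Om act z) ^ m) vac))
        (commF hC z o hzv hoz)
      simp only [LinearMap.sub_apply, Module.End.mul_apply, LinearMap.add_apply,
        LinearMap.sum_apply, LinearMap.smul_apply, Module.End.one_apply,
        LinearMap.neg_apply] at hcf
      have hu1 : ∀ i ∈ SD ℓ,
          -(act 0 (fP ℓ o i) (act (-1) (eP ℓ z i) (((Om act z) ^ m) vac)))
            - act (-1) (eM ℓ z i) (act 0 (eM ℓ i o) (((Om act z) ^ m) vac))
          = act (-1) (eM ℓ z o) (((Om act z) ^ m) vac)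
            - (if i = o then act (-1) (eM ℓ z i) (((Om act z) ^ m) vac) else 0) := by
        intro i hi
        have hiz : i ≠ z := (memSD hzv).mp hi
        rw [hB'kill i hiz m, map_zero, sub_zero]
        have h2 := hcomm 0 (-1) (fP ℓ o i) (eP ℓ z i) (((Om act z) ^ m) vac)
        rw [hA'kill i hiz m, map_zero, sub_zero] at h2
        rw [h2, lie10 z o i i hoz hiz]
        by_cases hio : i = o
        · subst hio
          simp [show ¬((0:ℤ) + -1 = 0) by decide, map_add, map_neg]
        · simp [hio, show ¬((0:ℤ) + -1 = 0) by decide, map_add, map_neg]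
      rw [Finset.sum_congr rfl hu1, Finset.sum_sub_distrib, Finset.sum_const,
        Finset.sum_ite_eq' (SD ℓ) o, if_pos ((memSD hzv).mpr hoz)] at hcf
      have hD : act 0 (Est ℓ (Sum.inr z) (Sum.inr z) - Est ℓ (Sum.inl z) (Sum.inl z))
          (((Om act z) ^ m) vac) = (-(2 * (m : ℂ))) • (((Om act z) ^ m) vac) := by
        have hDm : Est ℓ (Sum.inr z) (Sum.inr z) - Est ℓ (Sum.inl z) (Sum.inl z)
            = -(eM ℓ z z) := by rw [eM, neg_sub]
        rw [hDm, map_neg, LinearMap.neg_apply, hHs m, ← neg_smul]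
        congr 1
        ring
      rw [hD] at hcf
      rw [← Nat.cast_smul_eq_nsmul ℂ] at hcf
      have hcomb : act (-1) (eM ℓ z o)
          ((-(2 * (m : ℂ))) • (((Om act z) ^ m) vac) + k • (((Om act z) ^ m) vac))
          = (k - 2 * (m : ℂ)) • act (-1) (eM ℓ z o) (((Om act z) ^ m) vac) := by
        rw [← add_smul, _root_.map_smul]
        congr 1
        ring
      rw [hcomb] at hcf
      have hR : (((SD ℓ).card : ℂ)) • (act (-1) (eM ℓ z o) (((Om act z) ^ m) vac))
            - act (-1) (eM ℓ z o) (((Om act z) ^ m) vac)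
            + (k - 2 * (m : ℂ)) • act (-1) (eM ℓ z o) (((Om act z) ^ m) vac)
          = (c - 2 * (m : ℂ)) • act (-1) (eM ℓ z o) (((Om act z) ^ m) vac) := by
        rw [hcard, hcdef]
        module
      rw [hR] at hcf
      rw [h0, sub_eq_iff_eq_add.mp hcf]
      abel
    have hkey : ∀ m : ℕ, act 1 (fP ℓ z o) (((Om act z) ^ (m + 1)) vac)
        = (((m : ℂ) + 1) * (c - (m : ℂ))) • (act (-1) (eM ℓ z o) (((Om act z) ^ m) vac)) := by
      intro m
      induction m with
      | zero =>
        rw [hFu 0]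
        have h00 : ((Om act z) ^ 0) vac = vac := by rw [pow_zero]; rfl
        rw [h00, hvac 1 (by norm_num) _, map_zero, zero_add]
        norm_num
      | succ m ih =>
        rw [hFu (m + 1), ih, _root_.map_smul]
        have hswap : Om act z (act (-1) (eM ℓ z o) (((Om act z) ^ m) vac))
            = act (-1) (eM ℓ z o) (((Om act z) ^ (m + 1)) vac) := by
          have h := congrArg (fun T : Module.End ℂ N => T (((Om act z) ^ m) vac)) hEoOm
          simp only [Module.End.mul_apply] at h
          rw [← h]
          congr 1
          rw [pow_succ']
          rfl
        rw [hswap, ← add_smul]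
        congr 1
        push_cast
        ring
    obtain ⟨m, rfl⟩ : ∃ m, n = m + 1 := ⟨n - 1, by omega⟩
    have hfin := hkey m
    have hc0 : c - (m : ℂ) = 0 := by rw [hcdef, hk]; push_cast; ring
    rw [hc0, mul_zero, zero_smul] at hfin
    rw [hv']
    exact hfin
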